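/- Let W be a CSF satisfying Competitiveness, Co-monotonicity, and p-Continuity. Then for any fixed e₀, the set {W(e₀,p) : p ∈ Δ_k} equals the open interval (0,1). -/

import Mathlib

open MeasureTheory Set Filter Topology

noncomputable section

/-- A family of performance CDFs `{F_e}` as in Definition 2 (RPF):
each `F e` is a continuous strictly increasing CDF, and for each `x`
the map `e ↦ F e x` is continuous, strictly decreasing on `(0,∞)`,
and tends to `0` as `e → ∞`. -/
def IsCDFfam (F : ℝ → ℝ → ℝ) : Prop :=
  (∀ e ∈ Set.Ioi (0:ℝ), Continuous (F e) ∧ StrictMono (F e) ∧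
    Filter.Tendsto (F e) Filter.atBot (nhds 0) ∧
    Filter.Tendsto (F e) Filter.atTop (nhds 1)) ∧
  (∀ x : ℝ, ContinuousOn (fun e => F e x) (Set.Ioi 0) ∧
    StrictAntiOn (fun e => F e x) (Set.Ioi 0) ∧
    Filter.Tendsto (fun e => F e x) Filter.atTop (nhds 0))

/-- `p ∈ Δ_k`: a Borel measure on `E = (0,∞)` (modeled as a measure on `ℝ`
giving no mass to `(-∞,0]`) with total mass in `(k, 1]`. -/
def MemDelta (k : ℝ) (p : MeasureTheory.Measure ℝ) : Prop :=
  p (Set.Iic 0) = 0 ∧ ENNReal.ofReal k < p Set.univ ∧ p Set.univ ≤ 1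

/-- A contest success function with budget `k`. -/
def IsCSF (k : ℝ) (W : ℝ → MeasureTheory.Measure ℝ → ℝ) : Prop :=
  ∀ p : MeasureTheory.Measure ℝ, MemDelta k p →
    (∀ e ∈ Set.Ioi (0:ℝ), W e p ∈ Set.Icc (0:ℝ) 1) ∧
    Measurable (fun e => W e p) ∧ (∫ e, W e p ∂p) = k

/-- Random Performance Function: `W e p = 1 - F e (s p)` where the cutoff
`s p` solves the market-clearing equation. -/
def IsRPF (k : ℝ) (W : ℝ → MeasureTheory.Measure ℝ → ℝ) : Prop :=
  ∃ F : ℝ → ℝ → ℝ, IsCDFfam F ∧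
    ∀ p : MeasureTheory.Measure ℝ, MemDelta k p → ∃ s : ℝ,
      (∫ e, (1 - F e s) ∂p) = k ∧ ∀ e ∈ Set.Ioi (0:ℝ), W e p = 1 - F e s

/-- Co-monotonicity. -/
def CoMonotone (k : ℝ) (W : ℝ → MeasureTheory.Measure ℝ → ℝ) : Prop :=
  ∀ e ∈ Set.Ioi (0:ℝ), ∀ e' ∈ Set.Ioi (0:ℝ), ∀ p p' : MeasureTheory.Measure ℝ,
    MemDelta k p → MemDelta k p' → W e p' ≤ W e p → W e' p' ≤ W e' p

/-- Monotonicity. -/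
def CSFMonotone (k : ℝ) (W : ℝ → MeasureTheory.Measure ℝ → ℝ) : Prop :=
  ∀ p : MeasureTheory.Measure ℝ, MemDelta k p →
    StrictMonoOn (fun e => W e p) (Set.Ioi 0) ∧
    Filter.Tendsto (fun e => W e p) Filter.atTop (nhds 1)

/-- Competitiveness. -/
def CSFCompetitive (k : ℝ) (W : ℝ → MeasureTheory.Measure ℝ → ℝ) : Prop :=
  ∀ e ∈ Set.Ioi (0:ℝ),
    Filter.Tendsto (fun eb => W e (MeasureTheory.Measure.dirac eb)) Filter.atTop (nhds 0)

/-- The mixture `α p + (1-α) p'`. -/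
def mix (α : ℝ) (p p' : MeasureTheory.Measure ℝ) : MeasureTheory.Measure ℝ :=
  ENNReal.ofReal α • p + ENNReal.ofReal (1 - α) • p'

/-- p-Continuity. -/
def PContinuousCSF (k : ℝ) (W : ℝ → MeasureTheory.Measure ℝ → ℝ) : Prop :=
  ∀ e ∈ Set.Ioi (0:ℝ), ∀ p p' : MeasureTheory.Measure ℝ,
    MemDelta k p → MemDelta k p' →
    ContinuousOn (fun α => W e (mix α p p')) (Set.Icc 0 1)

/-- e-Continuity. -/
def EContinuous (k : ℝ) (W : ℝ → MeasureTheory.Measure ℝ → ℝ) : Prop :=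
  ∀ p : MeasureTheory.Measure ℝ, MemDelta k p →
    ContinuousOn (fun e => W e p) (Set.Ioi 0)

/-- The right-shift `p ∔ a`. -/
def shift (p : MeasureTheory.Measure ℝ) (a : ℝ) : MeasureTheory.Measure ℝ :=
  MeasureTheory.Measure.map (fun x => x + a) p

/-- A single continuous strictly increasing CDF on `ℝ`. -/
def IsCDF (F : ℝ → ℝ) : Prop :=
  Continuous F ∧ StrictMono F ∧
  Filter.Tendsto F Filter.atBot (nhds 0) ∧ Filter.Tendsto F Filter.atTop (nhds 1)

/-- `F` represents `W` as an additive RPF: `W e p = 1 - F (s p - e)`. -/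
def RepresentsA (k : ℝ) (W : ℝ → MeasureTheory.Measure ℝ → ℝ) (F : ℝ → ℝ) : Prop :=
  ∀ p : MeasureTheory.Measure ℝ, MemDelta k p → ∃ s : ℝ,
    (∫ e, (1 - F (s - e)) ∂p) = k ∧ ∀ e ∈ Set.Ioi (0:ℝ), W e p = 1 - F (s - e)

/-- Additive RPF. -/
def IsARPF (k : ℝ) (W : ℝ → MeasureTheory.Measure ℝ → ℝ) : Prop :=
  ∃ F : ℝ → ℝ, IsCDF F ∧ RepresentsA k W F

/-- Invariance to Common Shifts. -/
def InvCommonShifts (k : ℝ) (W : ℝ → MeasureTheory.Measure ℝ → ℝ) : Prop :=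
  ∀ e ∈ Set.Ioi (0:ℝ), ∀ a ∈ Set.Ioi (0:ℝ), ∀ p : MeasureTheory.Measure ℝ,
    MemDelta k p → W e p = W (e + a) (shift p a)

/-- Invariance to p Shifts. -/
def InvPShifts (k : ℝ) (W : ℝ → MeasureTheory.Measure ℝ → ℝ) : Prop :=
  ∀ e ∈ Set.Ioi (0:ℝ), ∀ e' ∈ Set.Ioi (0:ℝ), ∀ a ∈ Set.Ioi (0:ℝ),
    ∀ p p' : MeasureTheory.Measure ℝ, MemDelta k p → MemDelta k p' →
    W e p = W e' p' → W e (shift p a) = W e' (shift p' a)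

lemma memDelta_smul_dirac {k α e : ℝ} (hk0 : 0 ≤ k) (hα : α ∈ Set.Ioc k 1)
    (he : 0 < e) : MemDelta k (ENNReal.ofReal α • MeasureTheory.Measure.dirac e) := by
  have hα0 : 0 < α := lt_of_le_of_lt hk0 hα.1
  refine ⟨?_, ?_, ?_⟩
  · rw [Measure.smul_apply, Measure.dirac_apply' _ measurableSet_Iic]
    rw [Set.indicator_of_notMem (by simpa using he)]
    simp
  · rw [Measure.smul_apply, measure_univ]
    simpa using (ENNReal.ofReal_lt_ofReal_iff hα0).2 hα.1
  · rw [Measure.smul_apply, measure_univ]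
    simpa using ENNReal.ofReal_le_one.2 hα.2

lemma memDelta_dirac {k e : ℝ} (hk : k < 1) (he : 0 < e) :
    MemDelta k (MeasureTheory.Measure.dirac e) := by
  refine ⟨?_, ?_, ?_⟩
  · rw [Measure.dirac_apply' _ measurableSet_Iic,
      Set.indicator_of_notMem (by simpa using he)]
  · rw [measure_univ]
    exact lt_of_lt_of_le (ENNReal.ofReal_lt_one.2 hk) le_rfl
  · rw [measure_univ]

lemma W_smul_dirac {k : ℝ} {W : ℝ → MeasureTheory.Measure ℝ → ℝ} (hW : IsCSF k W)
    {α e : ℝ} (hmem : MemDelta k (ENNReal.ofReal α • MeasureTheory.Measure.dirac e))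
    (hα : 0 < α) :
    W e (ENNReal.ofReal α • MeasureTheory.Measure.dirac e) = k / α := by
  have hint := (hW _ hmem).2.2
  rw [integral_smul_measure, integral_dirac, ENNReal.toReal_ofReal hα.le,
    smul_eq_mul] at hint
  rw [eq_div_iff hα.ne']
  linarith

lemma W_dirac {k : ℝ} {W : ℝ → MeasureTheory.Measure ℝ → ℝ} (hW : IsCSF k W)
    {e : ℝ} (hmem : MemDelta k (MeasureTheory.Measure.dirac e)) :
    W e (MeasureTheory.Measure.dirac e) = k := by
  have hint := (hW _ hmem).2.2
  rwa [integral_dirac] at hint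

lemma memDelta_mix_dirac {k α e₁ e₂ : ℝ} (hk : k ∈ Set.Ioo (0:ℝ) 1)
    (hα : α ∈ Set.Icc (0:ℝ) 1) (he₁ : 0 < e₁) (he₂ : 0 < e₂) :
    MemDelta k (mix α (MeasureTheory.Measure.dirac e₁) (MeasureTheory.Measure.dirac e₂)) := by
  have hmass : (mix α (MeasureTheory.Measure.dirac e₁) (MeasureTheory.Measure.dirac e₂))
      Set.univ = 1 := by
    rw [mix, Measure.add_apply, Measure.smul_apply, Measure.smul_apply, measure_univ,
      measure_univ, smul_eq_mul, smul_eq_mul, mul_one, mul_one,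
      ← ENNReal.ofReal_add hα.1 (by linarith [hα.2])]
    simp
  refine ⟨?_, ?_, ?_⟩
  · rw [mix, Measure.add_apply, Measure.smul_apply, Measure.smul_apply,
      Measure.dirac_apply' _ measurableSet_Iic, Measure.dirac_apply' _ measurableSet_Iic,
      Set.indicator_of_notMem (by simpa using he₁),
      Set.indicator_of_notMem (by simpa using he₂)]
    simp
  · rw [hmass]; exact ENNReal.ofReal_lt_one.2 hk.2
  · rw [hmass]

lemma mix_zero (p p' : MeasureTheory.Measure ℝ) : mix 0 p p' = p' := by
  simp [mix]

lemma mix_one (p p' : MeasureTheory.Measure ℝ) : mix 1 p p' = p := by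
  simp [mix]

/-- for a CSF satisfying Competitiveness, Co-monotonicity and
p-Continuity, the range of `p ↦ W(e₀,p)` over `Δ_k` is exactly `(0,1)`. -/
theorem range_eq_Ioo (k : ℝ) (hk : k ∈ Set.Ioo (0:ℝ) 1)
    (W : ℝ → MeasureTheory.Measure ℝ → ℝ) (hW : IsCSF k W)
    (hcomp : CSFCompetitive k W) (hco : CoMonotone k W) (hpc : PContinuousCSF k W)
    (e₀ : ℝ) (he₀ : e₀ ∈ Set.Ioi (0:ℝ)) :
    {x : ℝ | ∃ p : MeasureTheory.Measure ℝ, MemDelta k p ∧ W e₀ p = x} =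
      Set.Ioo (0:ℝ) 1 := by
  obtain ⟨hk0, hk1⟩ := hk
  have he₀' : (0:ℝ) < e₀ := he₀
  -- a.e. membership in Ioi 0
  have hae : ∀ p : MeasureTheory.Measure ℝ, MemDelta k p → ∀ᵐ e ∂p, e ∈ Set.Ioi (0:ℝ) := by
    intro p hp
    rw [ae_iff]
    have : {e : ℝ | ¬ e ∈ Set.Ioi (0:ℝ)} = Set.Iic 0 := by ext e; simp [not_lt]
    rw [this]; exact hp.1
  have htoReal : ∀ p : MeasureTheory.Measure ℝ, MemDelta k p →
      k < (p Set.univ).toReal := by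
    intro p hp
    have h1 : p Set.univ ≠ ⊤ := ne_top_of_le_ne_top ENNReal.one_ne_top hp.2.2
    have := (ENNReal.toReal_lt_toReal ENNReal.ofReal_ne_top h1).2 hp.2.1
    rwa [ENNReal.toReal_ofReal hk0.le] at this
  -- Forward: every achieved value lies in (0,1)
  have hmem_Ioo : ∀ p : MeasureTheory.Measure ℝ, MemDelta k p →
      W e₀ p ∈ Set.Ioo (0:ℝ) 1 := by
    intro p hp
    have hbd := (hW p hp).1 e₀ he₀
    constructor
    · -- positivity
      by_contra h
      push_neg at h
      have h0 : W e₀ p = 0 := le_antisymm h hbd.1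
      have hzero : ∀ e' ∈ Set.Ioi (0:ℝ), W e' p = 0 := by
        intro e' he'
        have hle : W e' p ≤ 0 := by
          have hev : ∀ᶠ eb in Filter.atTop,
              W e' p ≤ W e' (MeasureTheory.Measure.dirac eb) := by
            filter_upwards [Filter.eventually_gt_atTop (0:ℝ)] with eb heb
            have hmd := memDelta_dirac hk1 heb
            have hle0 : W e₀ p ≤ W e₀ (MeasureTheory.Measure.dirac eb) := by
              rw [h0]; exact ((hW _ hmd).1 e₀ he₀).1
            exact hco e₀ he₀ e' he' _ p hmd hp hle0
          exact ge_of_tendsto (hcomp e' he') hev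
        exact le_antisymm hle ((hW p hp).1 e' he').1
      have hint0 : (∫ e, W e p ∂p) = 0 := by
        refine integral_eq_zero_of_ae ?_
        filter_upwards [hae p hp] with e he
        exact hzero e he
      exact absurd ((hW p hp).2.2.symm.trans hint0) (by linarith)
    · -- strictly below 1
      by_contra h
      push_neg at h
      have h1 : W e₀ p = 1 := le_antisymm hbd.2 h
      have hone : ∀ e' ∈ Set.Ioi (0:ℝ), W e' p = 1 := by
        intro e' he'
        have hk_le : ∀ α : ℝ, α ∈ Set.Ioc k 1 → k / α ≤ W e' p := by
          intro α hα
          have hα0 : 0 < α := lt_trans hk0 hα.1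
          have hmd := memDelta_smul_dirac hk0.le hα he'
          have hle0 : W e₀ (ENNReal.ofReal α • MeasureTheory.Measure.dirac e') ≤
              W e₀ p := by
            rw [h1]; exact ((hW _ hmd).1 e₀ he₀).2
          have := hco e₀ he₀ e' he' p _ hp hmd hle0
          rwa [W_smul_dirac hW hmd hα0] at this
        have hwpos : 0 < W e' p := by
          have := hk_le 1 ⟨hk1, le_rfl⟩
          rw [div_one] at this; linarith
        by_contra hne
        have hwlt : W e' p < 1 := lt_of_le_of_ne ((hW p hp).1 e' he').2 hne
        set w := W e' p with hw
        have hkw : k < k / w := by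
          rw [lt_div_iff₀ hwpos]; nlinarith
        set α := min 1 ((k + k / w) / 2) with hαdef
        have hαk : k < α := lt_min hk1 (by linarith)
        have hα1 : α ≤ 1 := min_le_left _ _
        have hαlt : α < k / w := lt_of_le_of_lt (min_le_right _ _) (by linarith)
        have hα0 : 0 < α := lt_trans hk0 hαk
        have := hk_le α ⟨hαk, hα1⟩
        have : k / α > w := by
          rw [gt_iff_lt, lt_div_iff₀ hα0]
          calc w * α < w * (k / w) := by
                exact mul_lt_mul_of_pos_left hαlt hwpos
            _ = k := by field_simp
        linarith [hk_le α ⟨hαk, hα1⟩]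
      have hint1 : (∫ e, W e p ∂p) = (p Set.univ).toReal := by
        have : (∫ e, W e p ∂p) = ∫ _, (1:ℝ) ∂p := by
          refine integral_congr_ae ?_
          filter_upwards [hae p hp] with e he
          exact hone e he
        rw [this, integral_const, smul_eq_mul, mul_one, measureReal_def]
      have := htoReal p hp
      rw [← hint1, (hW p hp).2.2] at this
      exact lt_irrefl _ this
  ext x
  simp only [Set.mem_setOf_eq, Set.mem_Ioo]
  constructor
  · rintro ⟨p, hp, rfl⟩
    exact hmem_Ioo p hp
  · rintro ⟨hx0, hx1⟩
    rcases le_or_gt k x with hkx | hkx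
    · -- use scaled dirac at e₀
      set α := k / x with hαdef
      have hα : α ∈ Set.Ioc k 1 := by
        constructor
        · rw [hαdef, lt_div_iff₀ hx0]; nlinarith
        · rw [hαdef, div_le_one hx0]; exact hkx
      have hα0 : 0 < α := lt_trans hk0 hα.1
      have hmd := memDelta_smul_dirac hk0.le hα he₀'
      refine ⟨_, hmd, ?_⟩
      rw [W_smul_dirac hW hmd hα0, hαdef]
      field_simp
    · -- use mixtures of diracs via IVT
      have hev : ∀ᶠ eb in Filter.atTop,
          W e₀ (MeasureTheory.Measure.dirac eb) < x :=
        (hcomp e₀ he₀).eventually (gt_mem_nhds hx0)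
      obtain ⟨eb, hevb, heb⟩ :=
        (hev.and (Filter.eventually_gt_atTop (0:ℝ))).exists
      have hmde := memDelta_dirac hk1 heb
      have hmd0 := memDelta_dirac hk1 he₀'
      have hcont := hpc e₀ he₀ _ _ hmde hmd0
      have hsub := intermediate_value_Icc' (zero_le_one (α := ℝ)) hcont
      have hx_mem : x ∈ Set.Icc
          (W e₀ (mix 1 (MeasureTheory.Measure.dirac eb) (MeasureTheory.Measure.dirac e₀)))
          (W e₀ (mix 0 (MeasureTheory.Measure.dirac eb) (MeasureTheory.Measure.dirac e₀))) := by
        rw [mix_one, mix_zero, W_dirac hW hmd0]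
        exact ⟨le_of_lt hevb, le_of_lt hkx⟩
      obtain ⟨α, hα, hfα⟩ := hsub hx_mem
      exact ⟨_, memDelta_mix_dirac ⟨hk0, hk1⟩ hα heb he₀', hfα⟩
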